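/- Let A be a real n×m matrix of rank k. Then (−1)^k times the coefficient of x^{m−k} in the characteristic polynomial det(x·I − AᵀA) of the m×m matrix AᵀA equals Σ_{(I,J)} det(A_{I,J})², the sum running over all pairs (I,J) with I a k-element subset of the rows and J a k-element subset of the columns of A. (This quantity is the pseudo-determinant Det(AᵀA), the product of the k nonzero eigenvalues of AᵀA.) -/
import Mathlib

open Matrix

/-- The minor of a real `n × m` matrix `A` given by a `k`-element set `I` of row indices and
a `k`-element set `J` of column indices. For `k = 0` it equals `1`. -/
def Matrix.minorOn {n m k : ℕ} (A : Matrix (Fin n) (Fin m) ℝ)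
    (I : {s : Finset (Fin n) // s.card = k}) (J : {s : Finset (Fin m) // s.card = k}) : ℝ :=
  (A.submatrix (I.1.orderEmbOfFin I.2) (J.1.orderEmbOfFin J.2)).det

open Finset Polynomial Equiv

/-- pminor -/
def pm {m : ℕ} (M : Matrix (Fin m) (Fin m) ℝ) (t : Finset (Fin m)) : ℝ :=
  (M.submatrix (t.orderEmbOfFin rfl) (t.orderEmbOfFin rfl)).det

lemma pm_eq {m k : ℕ} (M : Matrix (Fin m) (Fin m) ℝ) (t : Finset (Fin m)) (h : t.card = k) :
    (M.submatrix (t.orderEmbOfFin h) (t.orderEmbOfFin h)).det = pm M t := by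
  subst h; rfl

lemma det_ite_one {m : ℕ} (N : Matrix (Fin m) (Fin m) ℝ) (s : Finset (Fin m)) :
    (Matrix.of fun i j => if i ∈ s then (1 : Matrix (Fin m) (Fin m) ℝ) i j else N i j).det
      = pm N sᶜ := by
  classical
  set D : Matrix (Fin m) (Fin m) ℝ :=
    Matrix.of fun i j => if i ∈ s then (1 : Matrix (Fin m) (Fin m) ℝ) i j else N i j with hD
  let e := Equiv.sumCompl (· ∈ s)
  have h1 : D.det = (D.submatrix e e).det := (det_submatrix_equiv_self e D).symm
  have h2 : D.submatrix e e =
      fromBlocks 1 0 (Matrix.of fun (i : {x // ¬ x ∈ s}) (j : {x // x ∈ s}) => N i.1 j.1)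
        (Matrix.of fun (i : {x // ¬ x ∈ s}) (j : {x // ¬ x ∈ s}) => N i.1 j.1) := by
    ext i j
    cases i with
    | inl i =>
      cases j with
      | inl j =>
        simp only [submatrix_apply, hD, Matrix.of_apply, e, Equiv.sumCompl_apply_inl,
          fromBlocks_apply₁₁, if_pos i.2, one_apply]
        by_cases hij : i = j
        · simp [hij]
        · rw [if_neg (fun h => hij (Subtype.ext h)), if_neg hij]
      | inr j =>
        simp only [submatrix_apply, hD, Matrix.of_apply, e, Equiv.sumCompl_apply_inl,
          Equiv.sumCompl_apply_inr, fromBlocks_apply₁₂, if_pos i.2, one_apply, Matrix.zero_apply]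
        rw [if_neg]
        exact fun h => j.2 (h ▸ i.2)
    | inr i =>
      cases j with
      | inl j =>
        simp only [submatrix_apply, hD, Matrix.of_apply, e, Equiv.sumCompl_apply_inl,
          Equiv.sumCompl_apply_inr, fromBlocks_apply₂₁, if_neg i.2]
      | inr j =>
        simp only [submatrix_apply, hD, Matrix.of_apply, e, Equiv.sumCompl_apply_inr,
          fromBlocks_apply₂₂, if_neg i.2]
  rw [h1, h2, det_fromBlocks_zero₁₂, det_one, one_mul]
  -- now relate subtype det to orderEmbOfFin det
  let Y : Matrix {x // ¬ x ∈ s} {x // ¬ x ∈ s} ℝ :=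
    Matrix.of fun i j => N i.1 j.1
  show Y.det = _
  let τ : Fin (sᶜ.card) ≃ {x // ¬ x ∈ s} :=
    (sᶜ.orderIsoOfFin rfl).toEquiv.trans (Equiv.subtypeEquivRight (fun x => Finset.mem_compl))
  rw [← det_submatrix_equiv_self τ Y]
  have hY : Y.submatrix τ τ = N.submatrix (sᶜ.orderEmbOfFin rfl) (sᶜ.orderEmbOfFin rfl) := by
    ext i j
    simp only [submatrix_apply, Matrix.of_apply, Y, τ, Equiv.trans_apply,
      Equiv.subtypeEquivRight_apply_coe, RelIso.coe_fn_toEquiv]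
    rw [Finset.coe_orderIsoOfFin_apply, Finset.coe_orderIsoOfFin_apply]
  rw [hY]
  rfl

lemma charpoly_as_sum {m : ℕ} (M : Matrix (Fin m) (Fin m) ℝ) :
    M.charpoly = ∑ s : Finset (Fin m),
      Polynomial.monomial s.card ((-1 : ℝ) ^ (m - s.card) * pm M sᶜ) := by
  classical
  let f := (Matrix.detRowAlternating : (Fin m → ℝ[X]) [⋀^Fin m]→ₗ[ℝ[X]] ℝ[X])
  let a : Fin m → (Fin m → ℝ[X]) := fun i => (X : ℝ[X]) • (1 : Matrix (Fin m) (Fin m) ℝ[X]) i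
  let b : Fin m → (Fin m → ℝ[X]) := fun i => -(((C : ℝ →+* ℝ[X]).mapMatrix M) i)
  have hcm : M.charpoly = f.toMultilinearMap (a + b) := by
    show (Matrix.charmatrix M).det = _
    congr 1
    funext i j
    simp only [charmatrix_apply, Pi.add_apply, a, b, Pi.smul_apply, Pi.neg_apply,
      diagonal_apply, one_apply, smul_eq_mul, mul_ite, mul_one, mul_zero, sub_eq_add_neg,
      RingHom.mapMatrix_apply, Matrix.map_apply]
  rw [hcm, f.toMultilinearMap.map_add_univ]
  refine Finset.sum_congr rfl fun s _ => ?_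
  -- pull out X factors
  let one : Fin m → (Fin m → ℝ[X]) := fun i => (1 : Matrix (Fin m) (Fin m) ℝ[X]) i
  let cm : Fin m → (Fin m → ℝ[X]) := fun i => ((C : ℝ →+* ℝ[X]).mapMatrix M) i
  have h1 : s.piecewise a b = s.piecewise (fun i => (X : ℝ[X]) • (s.piecewise one b) i)
      (s.piecewise one b) := by
    funext i j
    by_cases hi : i ∈ s <;>
      simp [Finset.piecewise, hi, a, b, one]
  have h2 : s.piecewise one b = sᶜ.piecewise (fun i => (-1 : ℝ[X]) • (s.piecewise one cm) i)
      (s.piecewise one cm) := by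
    funext i j
    by_cases hi : i ∈ s <;>
      simp [Finset.piecewise, hi, b, cm, one]
  rw [h1, f.toMultilinearMap.map_piecewise_smul, h2, f.toMultilinearMap.map_piecewise_smul]
  have h3 : f.toMultilinearMap (s.piecewise one cm) = C (pm M sᶜ) := by
    have h4 : s.piecewise one cm = (C : ℝ →+* ℝ[X]).mapMatrix
        (Matrix.of fun i j => if i ∈ s then (1 : Matrix (Fin m) (Fin m) ℝ) i j else M i j) := by
      funext i j
      by_cases hi : i ∈ s
      · rw [Finset.piecewise_eq_of_mem _ _ _ hi]
        simp [one, hi, one_apply, apply_ite C]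
      · rw [Finset.piecewise_eq_of_notMem _ _ _ hi]
        simp [cm, hi]
    show Matrix.det _ = _
    rw [h4, ← RingHom.map_det, det_ite_one]
  rw [h3]
  simp only [Finset.prod_const, smul_eq_mul, Finset.card_compl, Fintype.card_fin]
  have hneg : ((-1 : ℝ[X])) ^ (m - s.card) = C ((-1 : ℝ) ^ (m - s.card)) := by
    rw [map_pow, map_neg, Polynomial.C_1]
  rw [hneg, ← C_mul, ← C_mul_X_pow_eq_monomial]
  ring

lemma coeff_charpoly_minors {m k : ℕ} (M : Matrix (Fin m) (Fin m) ℝ) (hk : k ≤ m) :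
    (-1 : ℝ) ^ k * M.charpoly.coeff (m - k) =
      ∑ J : {s : Finset (Fin m) // s.card = k}, pm M J.1 := by
  classical
  rw [charpoly_as_sum, Polynomial.finset_sum_coeff]
  simp only [Polynomial.coeff_monomial]
  rw [Finset.mul_sum]
  have step1 : ∀ s : Finset (Fin m), (-1 : ℝ) ^ k *
      (if s.card = m - k then (-1 : ℝ) ^ (m - s.card) * pm M sᶜ else 0) =
      (if sᶜ.card = k then pm M sᶜ else 0) := by
    intro s
    have hcs : s.card ≤ m := by simpa using s.card_le_univ
    have hcc : sᶜ.card = m - s.card := by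
      rw [Finset.card_compl, Fintype.card_fin]
    by_cases h : s.card = m - k
    · rw [if_pos h, if_pos (by omega), h, Nat.sub_sub_self hk, ← mul_assoc, ← pow_add]
      rw [Even.neg_one_pow ⟨k, rfl⟩, one_mul]
    · rw [if_neg h, if_neg (by omega), mul_zero]
  simp only [step1]
  rw [Fintype.sum_bijective (fun s : Finset (Fin m) => sᶜ)
    (Function.Involutive.bijective fun s => compl_compl s)
    _ (fun t => if t.card = k then pm M t else 0) (fun s => rfl)]
  rw [← Finset.sum_filter]
  exact Finset.sum_subtype _ (fun t => by simp) _

lemma orderEmbOfFin_congr {α : Type*} [LinearOrder α] {k : ℕ} {s t : Finset α}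
    (h : s = t) (hs : s.card = k) (ht : t.card = k) (x : Fin k) :
    s.orderEmbOfFin hs x = t.orderEmbOfFin ht x := by subst h; rfl

/-- The image of an injective `φ : Fin k → Fin n` as a `k`-element subset. -/
def imgSet {n k : ℕ} (φ : Fin k → Fin n) (hφ : Function.Injective φ) :
    {s : Finset (Fin n) // s.card = k} :=
  ⟨Finset.image φ Finset.univ, by
    rw [Finset.card_image_of_injective _ hφ, Finset.card_univ, Fintype.card_fin]⟩

/-- The permutation relating `φ` to the order embedding of its image. -/
noncomputable def permOf {n k : ℕ} (φ : Fin k → Fin n) (hφ : Function.Injective φ) : Equiv.Perm (Fin k) :=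
  Equiv.ofBijective
    (fun i => ((imgSet φ hφ).1.orderIsoOfFin (imgSet φ hφ).2).symm
      ⟨φ i, Finset.mem_image_of_mem φ (Finset.mem_univ i)⟩)
    (by
      refine (Fintype.bijective_iff_injective_and_card _).2 ⟨?_, rfl⟩
      intro a b hab
      apply hφ
      have := congrArg (((imgSet φ hφ).1.orderIsoOfFin (imgSet φ hφ).2)) hab
      rw [OrderIso.apply_symm_apply, OrderIso.apply_symm_apply] at this
      exact congrArg Subtype.val this)

lemma permOf_spec {n k : ℕ} (φ : Fin k → Fin n) (hφ : Function.Injective φ) (x : Fin k) :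
    (imgSet φ hφ).1.orderEmbOfFin (imgSet φ hφ).2 (permOf φ hφ x) = φ x := by
  rw [permOf, Equiv.ofBijective_apply, ← Finset.coe_orderIsoOfFin_apply,
    OrderIso.apply_symm_apply]

lemma imgSet_comp {n k : ℕ} (I : {s : Finset (Fin n) // s.card = k}) (σ : Equiv.Perm (Fin k))
    (h : Function.Injective (I.1.orderEmbOfFin I.2 ∘ σ)) :
    (imgSet (I.1.orderEmbOfFin I.2 ∘ σ) h) = I := by
  refine Subtype.ext ?_
  show Finset.image _ Finset.univ = I.1
  ext a
  simp only [Finset.mem_image, Finset.mem_univ, true_and, Function.comp_apply]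
  constructor
  · rintro ⟨x, rfl⟩
    exact Finset.orderEmbOfFin_mem I.1 I.2 (σ x)
  · intro ha
    have : a ∈ Set.range (I.1.orderEmbOfFin I.2) := by
      rw [Finset.range_orderEmbOfFin]
      exact ha
    obtain ⟨y, hy⟩ := this
    exact ⟨σ.symm y, by simp [hy]⟩

lemma pair_left_inv {n k : ℕ} (I : {s : Finset (Fin n) // s.card = k}) (σ : Equiv.Perm (Fin k))
    (h : Function.Injective (I.1.orderEmbOfFin I.2 ∘ σ)) :
    ((imgSet (I.1.orderEmbOfFin I.2 ∘ σ) h, permOf (I.1.orderEmbOfFin I.2 ∘ σ) h) :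
      {s : Finset (Fin n) // s.card = k} × Equiv.Perm (Fin k)) = (I, σ) := by
  refine Prod.ext (imgSet_comp I σ h) (Equiv.ext fun x => ?_)
  have hkey := permOf_spec (I.1.orderEmbOfFin I.2 ∘ σ) h x
  have := orderEmbOfFin_congr (congrArg Subtype.val (imgSet_comp I σ h))
    (imgSet _ h).2 I.2 (permOf _ h x)
  rw [this] at hkey
  exact (I.1.orderEmbOfFin I.2).injective hkey

set_option maxHeartbeats 1000000 in
lemma cauchy_binet {n k : ℕ} (B : Matrix (Fin n) (Fin k) ℝ) :
    (Bᵀ * B).det = ∑ I : {s : Finset (Fin n) // s.card = k},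
      (B.submatrix (I.1.orderEmbOfFin I.2) id).det ^ 2 := by
  classical
  let f := (Matrix.detRowAlternating : (Fin k → ℝ) [⋀^Fin k]→ₗ[ℝ] ℝ)
  have h0 : (Bᵀ * B).det = f.toMultilinearMap (fun i => ∑ r : Fin n, B r i • B r) := by
    show Matrix.det _ = Matrix.det _
    congr 1
    funext i j
    simp [mul_apply, mul_comm]
  have h1 : ∀ φ : Fin k → Fin n, f.toMultilinearMap (fun i => B (φ i) i • B (φ i)) =
      (∏ i, B (φ i) i) * (B.submatrix φ id).det := by
    intro φ
    rw [f.toMultilinearMap.map_smul_univ]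
    rfl
  rw [h0, f.toMultilinearMap.map_sum]
  simp only [h1]
  rw [← Finset.sum_filter_of_ne (p := fun φ : Fin k → Fin n => Function.Injective φ)
    (fun φ _ hne => by
      by_contra hinj
      apply hne
      rw [Function.not_injective_iff] at hinj
      obtain ⟨i, j, hij, hne'⟩ := hinj
      rw [Matrix.det_zero_of_row_eq hne' (by funext x; simp [hij]), mul_zero])]
  rw [show (∑ I : {s : Finset (Fin n) // s.card = k},
        (B.submatrix (I.1.orderEmbOfFin I.2) id).det ^ 2) =
      ∑ p : {s : Finset (Fin n) // s.card = k} × Equiv.Perm (Fin k),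
        (∏ i, B (p.1.1.orderEmbOfFin p.1.2 (p.2 i)) i) *
          (B.submatrix (p.1.1.orderEmbOfFin p.1.2 ∘ p.2) id).det from ?_, eq_comm]
  · -- the bijection between injective maps and (subset, permutation) pairs
    refine Finset.sum_bij' (i := fun (p : {s : Finset (Fin n) // s.card = k} × Equiv.Perm (Fin k))
        (_ : p ∈ Finset.univ) => (p.1.1.orderEmbOfFin p.1.2) ∘ p.2)
      (j := fun φ hφ => (imgSet φ (Finset.mem_filter.1 hφ).2, permOf φ (Finset.mem_filter.1 hφ).2))
      ?_ ?_ ?_ ?_ ?_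
    · intro p _
      simp only [Finset.mem_filter, Finset.mem_univ, true_and]
      exact ((p.1.1.orderEmbOfFin p.1.2).injective).comp p.2.injective
    · intro φ hφ
      exact Finset.mem_univ _
    · -- left inverse on pairs
      intro p hp
      exact pair_left_inv p.1 p.2 _
    · -- right inverse on functions
      intro φ hφ
      funext x
      exact permOf_spec φ (Finset.mem_filter.1 hφ).2 x
    · intro p _
      rfl
  · -- compute the inner sum over permutations
    rw [Fintype.sum_prod_type]
    refine Finset.sum_congr rfl fun I _ => Eq.symm ?_
    show (∑ σ : Equiv.Perm (Fin k), (∏ i, B (I.1.orderEmbOfFin I.2 (σ i)) i) *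
      (B.submatrix ((I.1.orderEmbOfFin I.2) ∘ σ) id).det) = _
    have hsub : ∀ σ : Equiv.Perm (Fin k), B.submatrix ((I.1.orderEmbOfFin I.2) ∘ σ) id =
        (B.submatrix (I.1.orderEmbOfFin I.2) id).submatrix σ id := fun σ => rfl
    calc ∑ σ : Equiv.Perm (Fin k), (∏ i, B (I.1.orderEmbOfFin I.2 (σ i)) i) *
          (B.submatrix ((I.1.orderEmbOfFin I.2) ∘ σ) id).det
        = ∑ σ : Equiv.Perm (Fin k), (((Equiv.Perm.sign σ : ℤ) : ℝ) *
            ∏ i, (B.submatrix (I.1.orderEmbOfFin I.2) id) (σ i) i) *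
            (B.submatrix (I.1.orderEmbOfFin I.2) id).det := by
          refine Finset.sum_congr rfl fun σ _ => ?_
          rw [hsub, Matrix.det_permute]
          show (∏ i, (B.submatrix (I.1.orderEmbOfFin I.2) id) (σ i) i) * _ = _
          ring
      _ = (B.submatrix (I.1.orderEmbOfFin I.2) id).det ^ 2 := by
          rw [← Finset.sum_mul, ← Matrix.det_apply', sq]


/-- If `A` is a real `n × m` matrix of rank `k`, then `(-1)^k` times the coefficient of
`x^{m-k}` in the characteristic polynomial of `Aᵀ A` (i.e. the pseudo-determinant
`Det(Aᵀ A)`) equals the sum of the squares of all `k × k` minors of `A`. -/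
theorem pdet_gram_eq_sum_sq_minors {n m : ℕ} (A : Matrix (Fin n) (Fin m) ℝ) (k : ℕ)
    (hk : A.rank = k) :
    (-1 : ℝ) ^ k * (Aᵀ * A).charpoly.coeff (m - k) =
      ∑ I : {s : Finset (Fin n) // s.card = k}, ∑ J : {s : Finset (Fin m) // s.card = k},
        (A.minorOn I J) ^ 2 := by
  have hkm : k ≤ m := by rw [← hk]; exact A.rank_le_width
  rw [coeff_charpoly_minors _ hkm, Finset.sum_comm]
  refine Finset.sum_congr rfl fun J _ => ?_
  rw [← pm_eq (Aᵀ * A) J.1 J.2]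
  have hBB : (Aᵀ * A).submatrix (J.1.orderEmbOfFin J.2) (J.1.orderEmbOfFin J.2) =
      (A.submatrix id (J.1.orderEmbOfFin J.2))ᵀ * (A.submatrix id (J.1.orderEmbOfFin J.2)) := by
    ext i j
    simp [Matrix.mul_apply]
  rw [hBB, cauchy_binet]
  exact Finset.sum_congr rfl fun I _ => rfl
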